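/- arXiv:2112.11362 — 2 statements merged into one kernel-verified Lean document; each statement's English description precedes it below -/
import Mathlib

section
/- Let S be a finite universal signature and let AX⁻ consist of D0, D2, D3, D6, D7, D8, D10(a), D10(b) and MP. Then AX⁻ proves every instance of D5: AX⁻ ⊢ (⟨X ← x; Y ← y⟩(W = w ∧ Z = z) ∧ ⟨X ← x; W ← w⟩(Y = y ∧ Z = z)) ⇒ ⟨X ← x⟩(W = w ∧ Y = y ∧ Z = z), and this holds for any subset Z of V − (X ∪ {W, Y}), not only Z = V − (X ∪ {W, Y}). -/
namespace Causal

/-- A signature: exogenous variables `U`, endogenous variables `V`, a universe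
of values `Val`, range functions `RU`, `RV`, and a set `Int` of allowed
interventions (partial assignments of in-range values to endogenous variables). -/
structure Signature : Type 1 where
  U : Type
  V : Type
  Val : Type
  RU : U → Set Val
  RV : V → Set Val
  RU_nonempty : ∀ Y, (RU Y).Nonempty
  RV_nonempty : ∀ X, (RV X).Nonempty
  Int : Set (V → Option Val)
  Int_ok : ∀ I ∈ Int, ∀ X x, I X = some x → x ∈ RV X

variable {S : Signature}

/-- A finite signature: finitely many variables, each with finite range. -/
def Signature.IsFinite (S : Signature) : Prop :=
  Finite S.U ∧ Finite S.V ∧ (∀ Y, (S.RU Y).Finite) ∧ (∀ X, (S.RV X).Finite)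

/-- An intervention is valid if it only sets variables to values in their ranges. -/
def ValidInt (S : Signature) (I : S.V → Option S.Val) : Prop :=
  ∀ X x, I X = some x → x ∈ S.RV X

/-- A universal signature: all (valid) interventions are allowed. -/
def Signature.Universal (S : Signature) : Prop :=
  S.Int = {I | ValidInt S I}

/-- A context: an assignment of in-range values to the exogenous variables. -/
def Context (S : Signature) : Type := {u : S.U → S.Val // ∀ Y, u Y ∈ S.RU Y}

/-- An assignment of in-range values to the endogenous variables (an outcome). -/
def Assignment (S : Signature) : Type := {v : S.V → S.Val // ∀ X, v X ∈ S.RV X}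

open Classical in
/-- `updInt I X x` is the intervention `I; X ← x`. -/
noncomputable def updInt (I : S.V → Option S.Val) (X : S.V) (x : S.Val) :
    S.V → Option S.Val :=
  fun Y => if Y = X then some x else I Y

/-- Events: Boolean combinations of primitive events `X = x` (with `x ∈ R(X)`). -/
inductive Event (S : Signature) : Type where
  | tru : Event S
  | prim : (X : S.V) → (x : S.Val) → x ∈ S.RV X → Event S
  | not : Event S → Event S
  | and : Event S → Event S → Event S
  | or : Event S → Event S → Event S

namespace Event

def imp (a b : Event S) : Event S := Event.or (Event.not a) b

/-- Satisfaction of an event by an assignment. -/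
def sat (v : Assignment S) : Event S → Prop
  | .tru => True
  | .prim X x _ => v.1 X = x
  | .not e => ¬ Event.sat v e
  | .and a b => Event.sat v a ∧ Event.sat v b
  | .or a b => Event.sat v a ∨ Event.sat v b

/-- Boolean evaluation of an event under an arbitrary valuation of its atoms;
used to define propositional tautologies. -/
def evalB (val : S.V → S.Val → Bool) : Event S → Bool
  | .tru => true
  | .prim X x _ => val X x
  | .not e => !(Event.evalB val e)
  | .and a b => Event.evalB val a && Event.evalB val b
  | .or a b => Event.evalB val a || Event.evalB val b

/-- An event is a propositional tautology if it is true under every Boolean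
valuation of its primitive events. -/
def Taut (e : Event S) : Prop := ∀ val, Event.evalB val e = true

/-- The value `x` of variable `X` is mentioned in the event. -/
def mentionsVal (X : S.V) (x : S.Val) : Event S → Prop
  | .tru => False
  | .prim X' x' _ => X' = X ∧ x' = x
  | .not e => Event.mentionsVal X x e
  | .and a b => Event.mentionsVal X x a ∨ Event.mentionsVal X x b
  | .or a b => Event.mentionsVal X x a ∨ Event.mentionsVal X x b

def bigAnd (l : List (Event S)) : Event S := l.foldr Event.and Event.tru

def bigOr (l : List (Event S)) : Event S := l.foldr Event.or (Event.not Event.tru)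

/-- The disjunction `⋁_{x ∈ l} X = x`. -/
def disjEq (X : S.V) (l : List {x : S.Val // x ∈ S.RV X}) : Event S :=
  bigOr (l.map fun x => Event.prim X x.1 x.2)

/-- The conjunction `⋀ X = x` over a list of (variable, value) pairs. -/
def conjEqL (l : List ((X : S.V) × {x : S.Val // x ∈ S.RV X})) : Event S :=
  bigAnd (l.map fun p => Event.prim p.1 p.2.1 p.2.2)

/-- Conjunctive formulas: conjunctions of literals `X = x` and `X ≠ x`. -/
inductive Conjunctive : Event S → Prop
  | tru : Conjunctive Event.tru
  | eq (X x hx) : Conjunctive (Event.prim X x hx)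
  | ne (X x hx) : Conjunctive (Event.not (Event.prim X x hx))
  | and {a b} : Conjunctive a → Conjunctive b → Conjunctive (Event.and a b)

/-- The set of conjuncts of a (conjunctive) formula. -/
def conjuncts : Event S → Set (Event S)
  | .tru => ∅
  | .and a b => Event.conjuncts a ∪ Event.conjuncts b
  | e => {e}

/-- Membership in the restricted language: only named variables and named values. -/
def InLang (W : Set S.V) (R' : S.V → Set S.Val) : Event S → Prop
  | .tru => True
  | .prim X x _ => X ∈ W ∧ x ∈ R' X
  | .not e => Event.InLang W R' e
  | .and a b => Event.InLang W R' a ∧ Event.InLang W R' b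
  | .or a b => Event.InLang W R' a ∧ Event.InLang W R' b

end Event

/-- Causal formulas: Boolean combinations of atomic formulas `[Y ← y]φ`
with `Y ← y` an allowed intervention and `φ` an event. -/
inductive CForm (S : Signature) : Type where
  | tru : CForm S
  | box : (I : S.V → Option S.Val) → I ∈ S.Int → Event S → CForm S
  | not : CForm S → CForm S
  | and : CForm S → CForm S → CForm S
  | or : CForm S → CForm S → CForm S

namespace CForm

def imp (a b : CForm S) : CForm S := CForm.or (CForm.not a) b

def iff (a b : CForm S) : CForm S := CForm.and (imp a b) (imp b a)

/-- `⟨Y ← y⟩φ` abbreviates `¬[Y ← y]¬φ`. -/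
def dia (I : S.V → Option S.Val) (hI : I ∈ S.Int) (e : Event S) : CForm S :=
  CForm.not (CForm.box I hI (Event.not e))

/-- Satisfaction of a causal formula at a context, relative to an outcome map `O`. -/
def sat (O : (I : S.V → Option S.Val) → I ∈ S.Int → Context S → Set (Assignment S))
    (u : Context S) : CForm S → Prop
  | .tru => True
  | .box I hI e => ∀ v ∈ O I hI u, e.sat v
  | .not φ => ¬ CForm.sat O u φ
  | .and a b => CForm.sat O u a ∧ CForm.sat O u b
  | .or a b => CForm.sat O u a ∨ CForm.sat O u b

/-- Boolean evaluation of a causal formula under an arbitrary valuation of its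
atomic formulas; used to define propositional tautologies. -/
def evalB (val : (S.V → Option S.Val) → Event S → Bool) : CForm S → Bool
  | .tru => true
  | .box I _ e => val I e
  | .not φ => !(CForm.evalB val φ)
  | .and a b => CForm.evalB val a && CForm.evalB val b
  | .or a b => CForm.evalB val a || CForm.evalB val b

/-- A causal formula is an instance of a propositional tautology if it is true
under every Boolean valuation of its atomic formulas. -/
def Taut (φ : CForm S) : Prop := ∀ val, CForm.evalB val φ = true

/-- The value `x` of variable `X` is mentioned in the causal formula
(either in a primitive event or in an intervention). -/
def mentionsVal (X : S.V) (x : S.Val) : CForm S → Prop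
  | .tru => False
  | .box I _ e => I X = some x ∨ e.mentionsVal X x
  | .not φ => CForm.mentionsVal X x φ
  | .and a b => CForm.mentionsVal X x a ∨ CForm.mentionsVal X x b
  | .or a b => CForm.mentionsVal X x a ∨ CForm.mentionsVal X x b

def bigAnd (l : List (CForm S)) : CForm S := l.foldr CForm.and CForm.tru

def bigOr (l : List (CForm S)) : CForm S := l.foldr CForm.or (CForm.not CForm.tru)

/-- Membership in the restricted language `L_{W,R',I'}(S)`. -/
def InLang (W : Set S.V) (R' : S.V → Set S.Val) (I' : Set (S.V → Option S.Val)) :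
    CForm S → Prop
  | .tru => True
  | .box I _ e => I ∈ I' ∧ e.InLang W R'
  | .not φ => CForm.InLang W R' I' φ
  | .and a b => CForm.InLang W R' I' a ∧ CForm.InLang W R' I' b
  | .or a b => CForm.InLang W R' I' a ∧ CForm.InLang W R' I' b

end CForm

/-- A structural equations model over `S`: each endogenous variable gets an
equation determining its value from the values of all other variables
(formally, `F X u v` does not depend on `v X`). -/
structure SEM (S : Signature) where
  F : S.V → (S.U → S.Val) → (S.V → S.Val) → S.Val
  F_range : ∀ X uu vv, F X uu vv ∈ S.RV X
  F_indep_self : ∀ X uu vv vv', (∀ Y, Y ≠ X → vv Y = vv' Y) → F X uu vv = F X uu vv'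

namespace SEM

/-- The outcomes of a SEM under an intervention: solutions of the modified equations. -/
def outcomes (M : SEM S) (u : Context S) (I : S.V → Option S.Val) :
    Set (Assignment S) :=
  {v | ∀ X, (∀ x, I X = some x → v.1 X = x) ∧ (I X = none → v.1 X = M.F X u.1 v.1)}

def sat (M : SEM S) (u : Context S) (φ : CForm S) : Prop :=
  φ.sat (fun I _ u' => M.outcomes u' I) u

def Valid (M : SEM S) (φ : CForm S) : Prop := ∀ u, M.sat u φ

/-- `X` is independent of `Y` in context `uu`: the equation for `X` does not
depend on the value of `Y`. -/
def IndepAt (M : SEM S) (uu : S.U → S.Val) (X Y : S.V) : Prop :=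
  ∀ vv vv', (∀ Z, Z ≠ Y → vv Z = vv' Z) → M.F X uu vv = M.F X uu vv'

/-- An acyclic (recursive) SEM. -/
def Acyclic (M : SEM S) : Prop :=
  ∀ u : Context S, ∃ lt : S.V → S.V → Prop, IsStrictTotalOrder S.V lt ∧
    ∀ X Y, lt X Y → M.IndepAt u.1 X Y

end SEM

/-- A generalized structural equations model: an arbitrary (effective) map from
allowed interventions and contexts to sets of outcomes. -/
structure GSEM (S : Signature) where
  F : (I : S.V → Option S.Val) → I ∈ S.Int → Context S → Set (Assignment S)
  effective : ∀ I hI u v, v ∈ F I hI u → ∀ X x, I X = some x → v.1 X = x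

namespace GSEM

def sat (M : GSEM S) (u : Context S) (φ : CForm S) : Prop :=
  φ.sat M.F u

def Valid (M : GSEM S) (φ : CForm S) : Prop := ∀ u, M.sat u φ

/-- A finitary GSEM: all outcome sets are finite. -/
def Finitary (M : GSEM S) : Prop := ∀ I hI u, (M.F I hI u).Finite

end GSEM

/-- Equivalence of two GSEMs: same outcomes for all contexts and allowed interventions. -/
def GSEM.equiv (M M' : GSEM S) : Prop := ∀ I hI u, M.F I hI u = M'.F I hI u

/-- `L(S)`-equivalence of two GSEMs: they agree on all causal formulas. -/
def GSEM.LEquiv (M M' : GSEM S) : Prop := ∀ u φ, M.sat u φ ↔ M'.sat u φ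

/-- Equivalence of a SEM and a GSEM. -/
def SEM.equivGSEM (M : SEM S) (M' : GSEM S) : Prop :=
  ∀ (I : S.V → Option S.Val) (hI : I ∈ S.Int) (u : Context S),
    M.outcomes u I = M'.F I hI u

/-- The projection of an outcome set to a single variable. -/
def projSet (T : Set (Assignment S)) (Y : S.V) : Set S.Val := (fun v => v.1 Y) '' T

/-- The restriction of an outcome set to a set of variables. -/
def restrictSet (T : Set (Assignment S)) (Wv : Set S.V) : Set (Wv → S.Val) :=
  (fun (v : Assignment S) (Y : Wv) => v.1 Y.1) '' T

/-! ### Axiom schemas -/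

/-- D0: all instances of propositional tautologies. -/
def AxD0 (S : Signature) : Set (CForm S) := {φ | φ.Taut}

/-- D1 (functionality): `[Y ← y](X = x ⇒ X ≠ x')` for `x ≠ x'`. -/
def AxD1 (S : Signature) : Set (CForm S) :=
  {φ | ∃ (I : S.V → Option S.Val) (hI : I ∈ S.Int) (X : S.V) (x x' : S.Val)
      (hx : x ∈ S.RV X) (hx' : x' ∈ S.RV X), x ≠ x' ∧
    φ = CForm.box I hI (Event.imp (Event.prim X x hx) (Event.not (Event.prim X x' hx')))}

/-- D2 (definiteness): `[Y ← y](⋁_{x ∈ R(X)} X = x)`. -/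
def AxD2 (S : Signature) : Set (CForm S) :=
  {φ | ∃ (I : S.V → Option S.Val) (hI : I ∈ S.Int) (X : S.V)
      (l : List {x : S.Val // x ∈ S.RV X}),
    (∀ x : {x : S.Val // x ∈ S.RV X}, x ∈ l) ∧ φ = CForm.box I hI (Event.disjEq X l)}

/-- D3 (composition): `⟨X ← x⟩(W = w ∧ φ) ⇒ ⟨X ← x; W ← w⟩φ`. -/
def AxD3 (S : Signature) : Set (CForm S) :=
  {ψ | ∃ (I : S.V → Option S.Val) (hI : I ∈ S.Int) (W : S.V) (w : S.Val)
      (hw : w ∈ S.RV W) (hIW : updInt I W w ∈ S.Int) (e : Event S),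
    ψ = CForm.imp (CForm.dia I hI (Event.and (Event.prim W w hw) e))
          (CForm.dia (updInt I W w) hIW e)}

/-- D4 (effectiveness): `[X ← x](X = x)`. -/
def AxD4 (S : Signature) : Set (CForm S) :=
  {φ | ∃ (I : S.V → Option S.Val) (hI : I ∈ S.Int) (X : S.V) (x : S.Val)
      (hx : x ∈ S.RV X), I X = some x ∧ φ = CForm.box I hI (Event.prim X x hx)}

/-- D5 (reversibility), with `Z = V − (X ∪ {W, Y})`. -/
def AxD5 (S : Signature) : Set (CForm S) :=
  {φ | ∃ (I : S.V → Option S.Val) (hI : I ∈ S.Int) (Y : S.V) (y : S.Val)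
      (hy : y ∈ S.RV Y) (W : S.V) (w : S.Val) (hw : w ∈ S.RV W)
      (hIY : updInt I Y y ∈ S.Int) (hIW : updInt I W w ∈ S.Int)
      (lZ : List ((X : S.V) × {x : S.Val // x ∈ S.RV X})),
    (lZ.map Sigma.fst).Nodup ∧
    (∀ Z : S.V, (∃ p ∈ lZ, p.1 = Z) ↔ (I Z = none ∧ Z ≠ W ∧ Z ≠ Y)) ∧
    φ = CForm.imp
      (CForm.and
        (CForm.dia (updInt I Y y) hIY (Event.and (Event.prim W w hw) (Event.conjEqL lZ)))
        (CForm.dia (updInt I W w) hIW (Event.and (Event.prim Y y hy) (Event.conjEqL lZ))))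
      (CForm.dia I hI (Event.and (Event.prim W w hw)
        (Event.and (Event.prim Y y hy) (Event.conjEqL lZ))))}

/-- A disjunct of the formula `Y ⇝ Z` ("Y affects Z"). -/
noncomputable def ltComp (I : S.V → Option S.Val) (hI : I ∈ S.Int) (Y : S.V) (y : S.Val)
    (hIY : updInt I Y y ∈ S.Int) (Z : S.V) (z z' : S.Val)
    (hz : z ∈ S.RV Z) (hz' : z' ∈ S.RV Z) : CForm S :=
  CForm.and (CForm.box I hI (Event.prim Z z hz))
    (CForm.box (updInt I Y y) hIY (Event.prim Z z' hz'))

/-- `φ` is (an instance of) the formula `Y ⇝ Z`: the disjunction, over all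
interventions `X ← x`, values `y ∈ R(Y)` and `z ≠ z' ∈ R(Z)`, of
`[X ← x](Z = z) ∧ [X ← x; Y ← y](Z = z')`. -/
def IsLeadsTo (Y Z : S.V) (φ : CForm S) : Prop :=
  ∃ l : List (CForm S),
    (∀ ψ ∈ l, ∃ (I : S.V → Option S.Val) (hI : I ∈ S.Int) (y : S.Val)
        (_ : y ∈ S.RV Y) (hIY : updInt I Y y ∈ S.Int) (z z' : S.Val)
        (hz : z ∈ S.RV Z) (hz' : z' ∈ S.RV Z), z ≠ z' ∧
        ψ = ltComp I hI Y y hIY Z z z' hz hz') ∧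
    (∀ (I : S.V → Option S.Val) (hI : I ∈ S.Int) (y : S.Val), y ∈ S.RV Y →
      ∀ (hIY : updInt I Y y ∈ S.Int) (z z' : S.Val) (hz : z ∈ S.RV Z)
        (hz' : z' ∈ S.RV Z), z ≠ z' →
        ltComp I hI Y y hIY Z z z' hz hz' ∈ l) ∧
    φ = CForm.bigOr l

/-- D6 (recursiveness): `(X₀ ⇝ X₁ ∧ … ∧ X_{k−1} ⇝ X_k) ⇒ ¬(X_k ⇝ X₀)`. -/
def AxD6 (S : Signature) : Set (CForm S) :=
  {φ | ∃ (k : ℕ) (Xs : Fin (k+1) → S.V) (fs : Fin k → CForm S) (g : CForm S),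
    (∀ i : Fin k, IsLeadsTo (Xs i.castSucc) (Xs i.succ) (fs i)) ∧
    IsLeadsTo (Xs (Fin.last k)) (Xs 0) g ∧
    φ = CForm.imp (CForm.bigAnd (List.ofFn fs)) (CForm.not g)}

/-- D7 (distribution): `([X ← x]φ ∧ [X ← x](φ ⇒ ψ)) ⇒ [X ← x]ψ`. -/
def AxD7 (S : Signature) : Set (CForm S) :=
  {φ | ∃ (I : S.V → Option S.Val) (hI : I ∈ S.Int) (a b : Event S),
    φ = CForm.imp (CForm.and (CForm.box I hI a) (CForm.box I hI (Event.imp a b)))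
          (CForm.box I hI b)}

/-- D8 (generalization): `[X ← x]φ` for `φ` a propositional tautology. -/
def AxD8 (S : Signature) : Set (CForm S) :=
  {φ | ∃ (I : S.V → Option S.Val) (hI : I ∈ S.Int) (e : Event S), e.Taut ∧
    φ = CForm.box I hI e}

/-- D9 (unique outcomes for `V − {X}`): `⟨Y ← y⟩true ∧ (⟨Y ← y⟩φ ⇒ [Y ← y]φ)`
for `Y = V − {X}`. -/
def AxD9 (S : Signature) : Set (CForm S) :=
  {φ | ∃ (I : S.V → Option S.Val) (hI : I ∈ S.Int) (X : S.V) (e : Event S),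
    I X = none ∧ (∀ Z, Z ≠ X → I Z ≠ none) ∧
    φ = CForm.and (CForm.dia I hI Event.tru)
          (CForm.imp (CForm.dia I hI e) (CForm.box I hI e))}

/-- Halpern's version of D9: `⟨Y ← y⟩true ∧ ⋁_{x ∈ R(X)} [Y ← y](X = x)`
for `Y = V − {X}`. -/
def AxHD9 (S : Signature) : Set (CForm S) :=
  {φ | ∃ (I : S.V → Option S.Val) (hI : I ∈ S.Int) (X : S.V)
      (l : List {x : S.Val // x ∈ S.RV X}),
    I X = none ∧ (∀ Z, Z ≠ X → I Z ≠ none) ∧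
    (∀ x : {x : S.Val // x ∈ S.RV X}, x ∈ l) ∧
    φ = CForm.and (CForm.dia I hI Event.tru)
          (CForm.bigOr (l.map fun x => CForm.box I hI (Event.prim X x.1 x.2)))}

/-- D10(a) (at least one outcome): `⟨Y ← y⟩true`. -/
def AxD10a (S : Signature) : Set (CForm S) :=
  {φ | ∃ (I : S.V → Option S.Val) (hI : I ∈ S.Int), φ = CForm.dia I hI Event.tru}

/-- D10(b) (at most one outcome): `⟨Y ← y⟩φ ⇒ [Y ← y]φ`. -/
def AxD10b (S : Signature) : Set (CForm S) :=
  {φ | ∃ (I : S.V → Option S.Val) (hI : I ∈ S.Int) (e : Event S),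
    φ = CForm.imp (CForm.dia I hI e) (CForm.box I hI e)}

/-! ### The axiom schema D6⁺ -/

/-- `X_{-i} = ȳ` : the conjunction of `X_j = g j` over the indices `j ≠ i`. -/
def Event.conjEqVec {k : ℕ} (Xs : Fin k → S.V)
    (g : ∀ j : Fin k, {x : S.Val // x ∈ S.RV (Xs j)}) (i : Fin k) : Event S :=
  Event.bigAnd (((List.finRange k).filter (fun j => j ≠ i)).map
    fun j => Event.prim (Xs j) (g j).1 (g j).2)

/-- A disjunct of the formula `X_i ⇝_{I',U₁,…,U_k,X₁,…,X_k} X_{−i}`: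
`[I; X_i ← x](X_{−i} = ȳ) ∧ [I; X_i ← x'](X_{−i} ≠ ȳ)`. -/
noncomputable def affComp {k : ℕ} (Xs : Fin k → S.V) (i : Fin k) (I : S.V → Option S.Val)
    (x x' : {v : S.Val // v ∈ S.RV (Xs i)})
    (hx : updInt I (Xs i) x.1 ∈ S.Int) (hx' : updInt I (Xs i) x'.1 ∈ S.Int)
    (g : ∀ j : Fin k, {v : S.Val // v ∈ S.RV (Xs j)}) : CForm S :=
  CForm.and (CForm.box (updInt I (Xs i) x.1) hx (Event.conjEqVec Xs g i))
    (CForm.box (updInt I (Xs i) x'.1) hx' (Event.not (Event.conjEqVec Xs g i)))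

/-- `φ` is (an instance of) the formula `X_i ⇝_{I',U₁,…,U_k,X₁,…,X_k} X_{−i}`. -/
def IsAffects {k : ℕ} (Xs : Fin k → S.V) (Us : Fin k → Set S.Val)
    (Is : Set (S.V → Option S.Val)) (i : Fin k) (φ : CForm S) : Prop :=
  ∃ l : List (CForm S),
    (∀ ψ ∈ l, ∃ (I : S.V → Option S.Val) (x x' : {v : S.Val // v ∈ S.RV (Xs i)})
        (hx : updInt I (Xs i) x.1 ∈ S.Int) (hx' : updInt I (Xs i) x'.1 ∈ S.Int)
        (g : ∀ j : Fin k, {v : S.Val // v ∈ S.RV (Xs j)}),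
        I ∈ Is ∧ x.1 ∈ Us i ∧ x'.1 ∈ Us i ∧ (∀ j, j ≠ i → (g j).1 ∈ Us j) ∧
        ψ = affComp Xs i I x x' hx hx' g) ∧
    (∀ (I : S.V → Option S.Val), I ∈ Is →
      ∀ (x x' : {v : S.Val // v ∈ S.RV (Xs i)})
        (hx : updInt I (Xs i) x.1 ∈ S.Int) (hx' : updInt I (Xs i) x'.1 ∈ S.Int)
        (g : ∀ j : Fin k, {v : S.Val // v ∈ S.RV (Xs j)}),
        x.1 ∈ Us i → x'.1 ∈ Us i → (∀ j, j ≠ i → (g j).1 ∈ Us j) →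
        affComp Xs i I x x' hx hx' g ∈ l) ∧
    φ = CForm.bigOr l

/-- D6⁺: `⋁_{i=1}^k ¬(X_i ⇝_{I',U₁,…,U_k,X₁,…,X_k} X_{−i})`, one instance for
each finite choice of variables `X₁,…,X_k`, finite value sets `U_i ⊆ R(X_i)`,
and finite set `I'` of allowed interventions. -/
def AxD6p (S : Signature) : Set (CForm S) :=
  {φ | ∃ (k : ℕ) (Xs : Fin k → S.V) (Us : Fin k → Set S.Val)
      (Is : Set (S.V → Option S.Val)) (fs : Fin k → CForm S),
    (∀ j, Us j ⊆ S.RV (Xs j)) ∧ (∀ j, (Us j).Finite) ∧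
    Is ⊆ S.Int ∧ Is.Finite ∧
    (∀ i, IsAffects Xs Us Is i (fs i)) ∧
    φ = CForm.bigOr (List.ofFn fun i => CForm.not (fs i))}

/-! ### Axiom systems and provability -/

def AXplus (S : Signature) : Set (CForm S) :=
  AxD0 S ∪ AxD1 S ∪ AxD2 S ∪ AxD3 S ∪ AxD4 S ∪ AxD5 S ∪ AxD7 S ∪ AxD8 S ∪ AxD9 S

def AXplusRec (S : Signature) : Set (CForm S) :=
  AxD0 S ∪ AxD1 S ∪ AxD2 S ∪ AxD3 S ∪ AxD4 S ∪ AxD6 S ∪ AxD7 S ∪ AxD8 S ∪ AxD9 S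
    ∪ AxD10a S ∪ AxD10b S

def AXbasic (S : Signature) : Set (CForm S) :=
  AxD0 S ∪ AxD1 S ∪ AxD2 S ∪ AxD4 S ∪ AxD7 S ∪ AxD8 S

def AXbasicRec (S : Signature) : Set (CForm S) := AXbasic S ∪ AxD6p S

def AXminus (S : Signature) : Set (CForm S) :=
  AxD0 S ∪ AxD2 S ∪ AxD3 S ∪ AxD6 S ∪ AxD7 S ∪ AxD8 S ∪ AxD10a S ∪ AxD10b S

def AXEQ (S : Signature) : Set (CForm S) :=
  AxD0 S ∪ AxD1 S ∪ AxD2 S ∪ AxD7 S ∪ AxD8 S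

/-- Provability from a set of axioms, with modus ponens. -/
inductive Provable (Ax : Set (CForm S)) : CForm S → Prop
  | ax {φ} : φ ∈ Ax → Provable Ax φ
  | mp {φ ψ} : Provable Ax (CForm.imp φ ψ) → Provable Ax φ → Provable Ax ψ

/-- Provability from a set of axioms, with modus ponens and the inference rule
D2⁺, relative to named variables `W`, named values `R'`, and a language `L`. -/
inductive ProvableStar (Ax : Set (CForm S)) (W : Set S.V) (R' : S.V → Set S.Val)
    (L : Set (CForm S)) : CForm S → Prop
  | ax {φ} : φ ∈ Ax → ProvableStar Ax W R' L φ
  | mp {φ ψ} : ProvableStar Ax W R' L (CForm.imp φ ψ) → ProvableStar Ax W R' L φ →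
      ProvableStar Ax W R' L ψ
  | d2plus {φ : CForm S} {I : S.V → Option S.Val} {hI : I ∈ S.Int} {ψ : Event S}
      {X : S.V} (hXW : X ∈ W)
      (l : List {x : S.Val // x ∈ S.RV X})
      (hsub : ∀ x ∈ l, x.1 ∈ R' X)
      (hmem : ∀ (x : S.Val) (hx : x ∈ S.RV X),
        (CForm.imp φ (CForm.box I hI ψ)).mentionsVal X x →
        (⟨x, hx⟩ : {x : S.Val // x ∈ S.RV X}) ∈ l)
      (hfresh : (∃ x ∈ R' X, ¬ (CForm.imp φ (CForm.box I hI ψ)).mentionsVal X x) →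
        ∃ x ∈ l, ¬ (CForm.imp φ (CForm.box I hI ψ)).mentionsVal X x.1)
      (hL : CForm.imp φ (CForm.box I hI (Event.not ψ)) ∈ L)
      (hprem : ProvableStar Ax W R' L
        (CForm.imp φ (CForm.bigAnd (l.map fun x =>
          CForm.box I hI (Event.imp ψ (Event.not (Event.prim X x.1 x.2)))))))
      : ProvableStar Ax W R' L (CForm.imp φ (CForm.box I hI (Event.not ψ)))

/-! ### Properties of GSEMs -/

/-- Coherence: if `v` is an outcome of `X ← x` and `v` agrees with a finite
extension `X ← x; Y ← y` of the intervention, then `v` is an outcome of the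
extended intervention. -/
def GSEM.Coherent (M : GSEM S) : Prop :=
  ∀ (I₁ : S.V → Option S.Val) (h₁ : I₁ ∈ S.Int) (I₂ : S.V → Option S.Val)
    (h₂ : I₂ ∈ S.Int),
    (∀ X x, I₁ X = some x → I₂ X = some x) →
    {X | I₁ X = none ∧ I₂ X ≠ none}.Finite →
    ∀ (u : Context S) (v : Assignment S), v ∈ M.F I₁ h₁ u →
      (∀ X x, I₂ X = some x → v.1 X = x) → v ∈ M.F I₂ h₂ u

/-- Condition Acyc1 for a GSEM, a context, and a strict order on the variables. -/
def GSEM.Acyc1At (M : GSEM S) (u : Context S) (lt : S.V → S.V → Prop) : Prop :=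
  ∀ (X : S.V) (x x' : S.Val), x ∈ S.RV X → x' ∈ S.RV X →
    ∀ (I : S.V → Option S.Val), I ∈ S.Int →
      ∀ (hx : updInt I X x ∈ S.Int) (hx' : updInt I X x' ∈ S.Int),
        restrictSet (M.F (updInt I X x) hx u) {Y | lt Y X}
          = restrictSet (M.F (updInt I X x') hx' u) {Y | lt Y X}

/-- An acyclic GSEM: for each context there is a total order on the endogenous
variables satisfying Acyc1. -/
def GSEM.Acyclic (M : GSEM S) : Prop :=
  ∀ u : Context S, ∃ lt : S.V → S.V → Prop, IsStrictTotalOrder S.V lt ∧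
    M.Acyc1At u lt

/-! ### Consistency and acceptability -/

/-- A set of formulas is consistent with a provability notion `Pr` if the
negation of the conjunction of no finite subset is provable. -/
def Consistent (Pr : CForm S → Prop) (C : Set (CForm S)) : Prop :=
  ∀ l : List (CForm S), (∀ ψ ∈ l, ψ ∈ C) → ¬ Pr (CForm.not (CForm.bigAnd l))

def MaxConsistent (Pr : CForm S → Prop) (C : Set (CForm S)) : Prop :=
  Consistent Pr C ∧ ∀ ψ ∉ C, ¬ Consistent Pr (insert ψ C)

/-- `C` is acceptable for `⟨Y ← y⟩φ` with respect to `Z`: some conjunctive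
formula `ψ` extends the conjuncts of `φ`, contains a conjunct `Z = z` with `z`
a named value, and `⟨Y ← y⟩ψ ∈ C`. -/
def AcceptableFor (C : Set (CForm S)) (I : S.V → Option S.Val) (hI : I ∈ S.Int)
    (φ : Event S) (R' : S.V → Set S.Val) (Z : S.V) : Prop :=
  ∃ ψ : Event S, ψ.Conjunctive ∧ φ.conjuncts ⊆ ψ.conjuncts ∧
    (∃ (z : S.Val) (hz : z ∈ S.RV Z), z ∈ R' Z ∧ Event.prim Z z hz ∈ ψ.conjuncts) ∧
    CForm.dia I hI ψ ∈ C

end Causal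

namespace Causal

/-! ### Infrastructure for derivations in AX⁻ -/

section AXminusDeriv

variable {S : Signature}

/-- Derivations from `AXminus` with a list of hypotheses. -/
inductive Deriv (S : Signature) : List (CForm S) → CForm S → Prop
  | ax {Γ φ} : φ ∈ AXminus S → Deriv S Γ φ
  | hyp {Γ φ} : φ ∈ Γ → Deriv S Γ φ
  | mp {Γ φ ψ} : Deriv S Γ (CForm.imp φ ψ) → Deriv S Γ φ → Deriv S Γ ψ

lemma mem_AXminus_D0 {φ : CForm S} (h : φ ∈ AxD0 S) : φ ∈ AXminus S := by
  simp only [AXminus, Set.mem_union]; tauto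

lemma mem_AXminus_D2 {φ : CForm S} (h : φ ∈ AxD2 S) : φ ∈ AXminus S := by
  simp only [AXminus, Set.mem_union]; tauto

lemma mem_AXminus_D3 {φ : CForm S} (h : φ ∈ AxD3 S) : φ ∈ AXminus S := by
  simp only [AXminus, Set.mem_union]; tauto

lemma mem_AXminus_D6 {φ : CForm S} (h : φ ∈ AxD6 S) : φ ∈ AXminus S := by
  simp only [AXminus, Set.mem_union]; tauto

lemma mem_AXminus_D7 {φ : CForm S} (h : φ ∈ AxD7 S) : φ ∈ AXminus S := by
  simp only [AXminus, Set.mem_union]; tauto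

lemma mem_AXminus_D8 {φ : CForm S} (h : φ ∈ AxD8 S) : φ ∈ AXminus S := by
  simp only [AXminus, Set.mem_union]; tauto

lemma mem_AXminus_D10a {φ : CForm S} (h : φ ∈ AxD10a S) : φ ∈ AXminus S := by
  simp only [AXminus, Set.mem_union]; tauto

lemma mem_AXminus_D10b {φ : CForm S} (h : φ ∈ AxD10b S) : φ ∈ AXminus S := by
  simp only [AXminus, Set.mem_union]; tauto

lemma Deriv.taut {Γ} {φ : CForm S} (h : φ.Taut) : Deriv S Γ φ :=
  .ax (mem_AXminus_D0 h)

@[simp] lemma CForm.evalB_imp (val) (a b : CForm S) :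
    (CForm.imp a b).evalB val = (!(a.evalB val) || b.evalB val) := rfl

@[simp] lemma CForm.evalB_not (val) (a : CForm S) :
    (CForm.not a).evalB val = !(a.evalB val) := rfl

@[simp] lemma CForm.evalB_and (val) (a b : CForm S) :
    (CForm.and a b).evalB val = (a.evalB val && b.evalB val) := rfl

@[simp] lemma CForm.evalB_or (val) (a b : CForm S) :
    (CForm.or a b).evalB val = (a.evalB val || b.evalB val) := rfl

@[simp] lemma CForm.evalB_tru (val) : (CForm.tru : CForm S).evalB val = true := rfl

lemma taut_tru : (CForm.tru : CForm S).Taut := fun _ => rfl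

lemma taut_K (a b : CForm S) : (a.imp (b.imp a)).Taut := by
  intro val; simp only [CForm.evalB_imp]
  cases a.evalB val <;> cases b.evalB val <;> rfl

lemma taut_S (a b c : CForm S) :
    ((a.imp (b.imp c)).imp ((a.imp b).imp (a.imp c))).Taut := by
  intro val; simp only [CForm.evalB_imp]
  cases a.evalB val <;> cases b.evalB val <;> cases c.evalB val <;> rfl

lemma taut_id (a : CForm S) : (a.imp a).Taut := by
  intro val; simp only [CForm.evalB_imp]; cases a.evalB val <;> rfl

lemma taut_andI (a b : CForm S) : (a.imp (b.imp (a.and b))).Taut := by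
  intro val; simp only [CForm.evalB_imp, CForm.evalB_and]
  cases a.evalB val <;> cases b.evalB val <;> rfl

lemma taut_andE1 (a b : CForm S) : ((a.and b).imp a).Taut := by
  intro val; simp only [CForm.evalB_imp, CForm.evalB_and]
  cases a.evalB val <;> cases b.evalB val <;> rfl

lemma taut_andE2 (a b : CForm S) : ((a.and b).imp b).Taut := by
  intro val; simp only [CForm.evalB_imp, CForm.evalB_and]
  cases a.evalB val <;> cases b.evalB val <;> rfl

lemma taut_notE (a c : CForm S) : (a.imp ((CForm.not a).imp c)).Taut := by
  intro val; simp only [CForm.evalB_imp, CForm.evalB_not]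
  cases a.evalB val <;> cases c.evalB val <;> rfl

lemma taut_notI (a c : CForm S) :
    ((a.imp c).imp ((a.imp (CForm.not c)).imp (CForm.not a))).Taut := by
  intro val; simp only [CForm.evalB_imp, CForm.evalB_not]
  cases a.evalB val <;> cases c.evalB val <;> rfl

lemma taut_dne (a : CForm S) : ((CForm.not (CForm.not a)).imp a).Taut := by
  intro val; simp only [CForm.evalB_imp, CForm.evalB_not]
  cases a.evalB val <;> rfl

lemma taut_contra (a b : CForm S) :
    ((a.imp b).imp ((CForm.not b).imp (CForm.not a))).Taut := by
  intro val; simp only [CForm.evalB_imp, CForm.evalB_not]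
  cases a.evalB val <;> cases b.evalB val <;> rfl

lemma taut_cases (a c : CForm S) :
    ((a.imp c).imp (((CForm.not a).imp c).imp c)).Taut := by
  intro val; simp only [CForm.evalB_imp, CForm.evalB_not]
  cases a.evalB val <;> cases c.evalB val <;> rfl

lemma taut_orE (a b c : CForm S) :
    ((a.or b).imp ((a.imp c).imp ((b.imp c).imp c))).Taut := by
  intro val; simp only [CForm.evalB_imp, CForm.evalB_or]
  cases a.evalB val <;> cases b.evalB val <;> cases c.evalB val <;> rfl

lemma taut_orIL (a b : CForm S) : (a.imp (a.or b)).Taut := by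
  intro val; simp only [CForm.evalB_imp, CForm.evalB_or]
  cases a.evalB val <;> cases b.evalB val <;> rfl

lemma taut_orIR (a b : CForm S) : (b.imp (a.or b)).Taut := by
  intro val; simp only [CForm.evalB_imp, CForm.evalB_or]
  cases a.evalB val <;> cases b.evalB val <;> rfl

lemma taut_ntruE (c : CForm S) : ((CForm.not CForm.tru).imp c).Taut := by
  intro val; simp only [CForm.evalB_imp, CForm.evalB_not, CForm.evalB_tru]
  cases c.evalB val <;> rfl

namespace Deriv

lemma weaken {Γ Γ' : List (CForm S)} {φ : CForm S} (h : Deriv S Γ φ)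
    (hsub : ∀ x ∈ Γ, x ∈ Γ') : Deriv S Γ' φ := by
  induction h with
  | ax h => exact .ax h
  | hyp h => exact .hyp (hsub _ h)
  | mp _ _ ih1 ih2 => exact .mp ih1 ih2

lemma weaken1 {Γ : List (CForm S)} {φ ψ : CForm S} (h : Deriv S Γ φ) :
    Deriv S (ψ :: Γ) φ :=
  h.weaken (fun x hx => List.mem_cons_of_mem _ hx)

lemma deduction {Γ : List (CForm S)} {ψ φ : CForm S} (h : Deriv S (ψ :: Γ) φ) :
    Deriv S Γ (ψ.imp φ) := by
  induction h with
  | ax h => exact .mp (.taut (taut_K _ ψ)) (.ax h)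
  | hyp h =>
    rcases List.mem_cons.1 h with h | h
    · subst h; exact .taut (taut_id _)
    · exact .mp (.taut (taut_K _ ψ)) (.hyp h)
  | mp _ _ ih1 ih2 => exact .mp (.mp (.taut (taut_S ψ _ _)) ih1) ih2

lemma undeduct {Γ : List (CForm S)} {ψ φ : CForm S} (h : Deriv S Γ (ψ.imp φ)) :
    Deriv S (ψ :: Γ) φ :=
  .mp h.weaken1 (.hyp (List.mem_cons_self))

lemma cut {Γ : List (CForm S)} {ψ φ : CForm S} (h1 : Deriv S Γ ψ)
    (h2 : Deriv S (ψ :: Γ) φ) : Deriv S Γ φ :=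
  .mp h2.deduction h1

lemma dImp {Γ} {a b : CForm S} (h : (a.imp b).Taut) (ha : Deriv S Γ a) :
    Deriv S Γ b := .mp (.taut h) ha

lemma dImp2 {Γ} {a b c : CForm S} (h : (a.imp (b.imp c)).Taut)
    (ha : Deriv S Γ a) (hb : Deriv S Γ b) : Deriv S Γ c :=
  .mp (.mp (.taut h) ha) hb

lemma andI {Γ} {a b : CForm S} (ha : Deriv S Γ a) (hb : Deriv S Γ b) :
    Deriv S Γ (a.and b) := dImp2 (taut_andI a b) ha hb

lemma andE1 {Γ} {a b : CForm S} (h : Deriv S Γ (a.and b)) : Deriv S Γ a :=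
  dImp (taut_andE1 a b) h

lemma andE2 {Γ} {a b : CForm S} (h : Deriv S Γ (a.and b)) : Deriv S Γ b :=
  dImp (taut_andE2 a b) h

lemma notE {Γ} {a c : CForm S} (h1 : Deriv S Γ a) (h2 : Deriv S Γ (CForm.not a)) :
    Deriv S Γ c := dImp2 (taut_notE a c) h1 h2

lemma notI {Γ} {a c : CForm S} (h1 : Deriv S (a :: Γ) c)
    (h2 : Deriv S (a :: Γ) (CForm.not c)) : Deriv S Γ (CForm.not a) :=
  dImp2 (taut_notI a c) h1.deduction h2.deduction

lemma byCases {Γ} {a c : CForm S} (h1 : Deriv S (a :: Γ) c)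
    (h2 : Deriv S (CForm.not a :: Γ) c) : Deriv S Γ c :=
  dImp2 (taut_cases a c) h1.deduction h2.deduction

lemma orIntroMem {Γ} {l : List (CForm S)} {d : CForm S} (hd : d ∈ l)
    (h : Deriv S Γ d) : Deriv S Γ (CForm.bigOr l) := by
  induction l with
  | nil => exact absurd hd List.not_mem_nil
  | cons e rest ih =>
    rcases List.mem_cons.1 hd with h' | h'
    · subst h'; exact dImp (taut_orIL _ _) h
    · exact dImp (taut_orIR _ _) (ih h')

lemma toProvable {φ : CForm S} (h : Deriv S [] φ) : Provable (AXminus S) φ := by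
  generalize hΓ : ([] : List (CForm S)) = Γ at h
  induction h with
  | ax h => exact .ax h
  | hyp h => subst hΓ; exact absurd h List.not_mem_nil
  | mp _ _ ih1 ih2 => exact .mp ih1 ih2

end Deriv

@[simp] lemma Event.evalB_imp (val) (a b : Event S) :
    (Event.imp a b).evalB val = (!(a.evalB val) || b.evalB val) := rfl

@[simp] lemma Event.evalB_not (val) (a : Event S) :
    (Event.not a).evalB val = !(a.evalB val) := rfl

@[simp] lemma Event.evalB_and (val) (a b : Event S) :
    (Event.and a b).evalB val = (a.evalB val && b.evalB val) := rfl

@[simp] lemma Event.evalB_or (val) (a b : Event S) :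
    (Event.or a b).evalB val = (a.evalB val || b.evalB val) := rfl

@[simp] lemma Event.evalB_tru (val) : (Event.tru : Event S).evalB val = true := rfl

lemma etaut_tru : (Event.tru : Event S).Taut := fun _ => rfl

lemma etaut_andE1 (a b : Event S) : (Event.imp (a.and b) a).Taut := by
  intro val; simp only [Event.evalB_imp, Event.evalB_and]
  cases a.evalB val <;> cases b.evalB val <;> rfl

lemma etaut_andE2 (a b : Event S) : (Event.imp (a.and b) b).Taut := by
  intro val; simp only [Event.evalB_imp, Event.evalB_and]
  cases a.evalB val <;> cases b.evalB val <;> rfl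

lemma etaut_andI (a b : Event S) : (Event.imp a (Event.imp b (a.and b))).Taut := by
  intro val; simp only [Event.evalB_imp, Event.evalB_and]
  cases a.evalB val <;> cases b.evalB val <;> rfl

lemma etaut_contraNTru (a : Event S) :
    (Event.imp (a.and (Event.not a)) (Event.not Event.tru)).Taut := by
  intro val; simp only [Event.evalB_imp, Event.evalB_and, Event.evalB_not,
    Event.evalB_tru]
  cases a.evalB val <;> rfl

lemma etaut_orNE (a b : Event S) :
    (Event.imp (a.or b) (Event.imp (Event.not a) b)).Taut := by
  intro val; simp only [Event.evalB_imp, Event.evalB_or, Event.evalB_not]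
  cases a.evalB val <;> cases b.evalB val <;> rfl

lemma etaut_bigAnd_mem {l : List (Event S)} {a : Event S} (h : a ∈ l) :
    (Event.imp (Event.bigAnd l) a).Taut := by
  induction l with
  | nil => exact absurd h List.not_mem_nil
  | cons e t ih =>
    rcases List.mem_cons.1 h with h' | h'
    · subst h'; exact etaut_andE1 _ _
    · intro val
      have := ih h' val
      simp only [Event.evalB_imp] at this ⊢
      show (!((Event.and e (Event.bigAnd t)).evalB val) || a.evalB val) = true
      simp only [Event.evalB_and]
      cases hb : (Event.bigAnd t).evalB val <;>
        cases he : e.evalB val <;> simp_all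

namespace Deriv

variable {Γ : List (CForm S)} {I : S.V → Option S.Val} {hI : I ∈ S.Int}

lemma boxTaut {e : Event S} (h : e.Taut) : Deriv S Γ (CForm.box I hI e) :=
  .ax (mem_AXminus_D8 ⟨I, hI, e, h, rfl⟩)

lemma d7ax (a b : Event S) :
    Deriv S Γ (CForm.imp (CForm.and (CForm.box I hI a) (CForm.box I hI (Event.imp a b)))
      (CForm.box I hI b)) :=
  .ax (mem_AXminus_D7 ⟨I, hI, a, b, rfl⟩)

lemma boxMono {a b : Event S} (ht : (Event.imp a b).Taut)
    (h : Deriv S Γ (CForm.box I hI a)) : Deriv S Γ (CForm.box I hI b) :=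
  .mp (d7ax a b) (andI h (boxTaut ht))

lemma boxMono2 {a b c : Event S} (ht : (Event.imp a (Event.imp b c)).Taut)
    (ha : Deriv S Γ (CForm.box I hI a)) (hb : Deriv S Γ (CForm.box I hI b)) :
    Deriv S Γ (CForm.box I hI c) :=
  .mp (d7ax b c) (andI hb (boxMono ht ha))

lemma boxAnd {a b : Event S} (ha : Deriv S Γ (CForm.box I hI a))
    (hb : Deriv S Γ (CForm.box I hI b)) :
    Deriv S Γ (CForm.box I hI (Event.and a b)) :=
  boxMono2 (etaut_andI a b) ha hb

lemma diaTru : Deriv S Γ (CForm.dia I hI Event.tru) :=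
  .ax (mem_AXminus_D10a ⟨I, hI, rfl⟩)

lemma d10bax (e : Event S) :
    Deriv S Γ (CForm.imp (CForm.dia I hI e) (CForm.box I hI e)) :=
  .ax (mem_AXminus_D10b ⟨I, hI, e, rfl⟩)

lemma boxOfDia {e : Event S} (h : Deriv S Γ (CForm.dia I hI e)) :
    Deriv S Γ (CForm.box I hI e) :=
  .mp (d10bax e) h

lemma diaOfBox {e : Event S} (h : Deriv S Γ (CForm.box I hI e)) :
    Deriv S Γ (CForm.dia I hI e) := by
  show Deriv S Γ (CForm.not (CForm.box I hI (Event.not e)))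
  refine notI (c := CForm.box I hI (Event.not Event.tru)) ?_ ?_
  · exact boxMono (etaut_contraNTru e)
      (boxAnd h.weaken1 (.hyp (List.mem_cons_self)))
  · exact (diaTru (hI := hI)).weaken1

lemma boxNotOfNotBox {e : Event S} (h : Deriv S Γ (CForm.not (CForm.box I hI e))) :
    Deriv S Γ (CForm.box I hI (Event.not e)) := by
  have h2 : Deriv S Γ (CForm.not (CForm.dia I hI e)) :=
    dImp2 (taut_contra (CForm.dia I hI e) (CForm.box I hI e)) (d10bax e) h
  exact dImp (taut_dne (CForm.box I hI (Event.not e))) h2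

lemma d3rule {Wv : S.V} {w : S.Val} {hw : w ∈ S.RV Wv} {e : Event S}
    (hIW : updInt I Wv w ∈ S.Int)
    (h : Deriv S Γ (CForm.box I hI (Event.and (Event.prim Wv w hw) e))) :
    Deriv S Γ (CForm.box (updInt I Wv w) hIW e) := by
  have hax : Deriv S Γ (CForm.imp
      (CForm.dia I hI (Event.and (Event.prim Wv w hw) e))
      (CForm.dia (updInt I Wv w) hIW e)) :=
    .ax (mem_AXminus_D3 ⟨I, hI, Wv, w, hw, hIW, e, rfl⟩)
  exact boxOfDia (.mp hax (diaOfBox h))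

lemma boxOrCases {c : CForm S} (el : List (Event S)) :
    ∀ {Γ : List (CForm S)}, Deriv S Γ (CForm.box I hI (Event.bigOr el)) →
    (∀ e ∈ el, Deriv S (CForm.box I hI e :: Γ) c) → Deriv S Γ c := by
  induction el with
  | nil =>
    intro Γ hd _
    exact notE (c := c) hd (diaTru (hI := hI))
  | cons e rest ih =>
    intro Γ hd H
    refine byCases (a := CForm.box I hI e) (H e (List.mem_cons_self)) ?_
    have hne : Deriv S (CForm.not (CForm.box I hI e) :: Γ)
        (CForm.box I hI (Event.not e)) :=
      boxNotOfNotBox (.hyp (List.mem_cons_self))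
    have hrest : Deriv S (CForm.not (CForm.box I hI e) :: Γ)
        (CForm.box I hI (Event.bigOr rest)) :=
      boxMono2 (etaut_orNE e (Event.bigOr rest)) hd.weaken1 hne
    refine ih hrest (fun e' he' => ?_)
    exact (H e' (List.mem_cons_of_mem _ he')).weaken
      (by intro x hx; rcases List.mem_cons.1 hx with h | h
          · exact h ▸ List.mem_cons_self
          · exact List.mem_cons_of_mem _ (List.mem_cons_of_mem _ h))

lemma valSplit (hfin : S.IsFinite) {c : CForm S} (X : S.V)
    (H : ∀ (x : S.Val) (hx : x ∈ S.RV X),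
      Deriv S (CForm.box I hI (Event.prim X x hx) :: Γ) c) :
    Deriv S Γ c := by
  haveI : Fintype {x : S.Val // x ∈ S.RV X} := (hfin.2.2.2 X).fintype
  set l : List {x : S.Val // x ∈ S.RV X} :=
    (Finset.univ : Finset {x : S.Val // x ∈ S.RV X}).toList with hl
  have hcomp : ∀ x : {x : S.Val // x ∈ S.RV X}, x ∈ l :=
    fun x => Finset.mem_toList.2 (Finset.mem_univ x)
  have hax : Deriv S Γ (CForm.box I hI (Event.disjEq X l)) :=
    .ax (mem_AXminus_D2 ⟨I, hI, X, l, hcomp, rfl⟩)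
  refine boxOrCases (l.map fun x => Event.prim X x.1 x.2) hax (fun e he => ?_)
  rcases List.mem_map.1 he with ⟨x, _, rfl⟩
  exact H x.1 x.2

lemma zSplit (hfin : S.IsFinite) {c : CForm S}
    (l : List ((X : S.V) × {x : S.Val // x ∈ S.RV X})) :
    ∀ {Γ : List (CForm S)},
    (∀ m : List ((X : S.V) × {x : S.Val // x ∈ S.RV X}),
      m.map Sigma.fst = l.map Sigma.fst →
      Deriv S (CForm.box I hI (Event.conjEqL m) :: Γ) c) →
    Deriv S Γ c := by
  induction l with
  | nil =>
    intro Γ H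
    exact (boxTaut (e := Event.conjEqL []) etaut_tru).cut (H [] rfl)
  | cons p rest ih =>
    intro Γ H
    refine valSplit (I := I) (hI := hI) hfin p.1 (fun x hx => ?_)
    refine ih (fun m' hm' => ?_)
    have h1 : Deriv S (CForm.box I hI (Event.conjEqL m') ::
        CForm.box I hI (Event.prim p.1 x hx) :: Γ)
        (CForm.box I hI (Event.prim p.1 x hx)) :=
      .hyp (List.mem_cons_of_mem _ (List.mem_cons_self))
    have h2 : Deriv S (CForm.box I hI (Event.conjEqL m') ::
        CForm.box I hI (Event.prim p.1 x hx) :: Γ)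
        (CForm.box I hI (Event.conjEqL m')) := .hyp (List.mem_cons_self)
    have h3 : Deriv S (CForm.box I hI (Event.conjEqL m') ::
        CForm.box I hI (Event.prim p.1 x hx) :: Γ)
        (CForm.box I hI (Event.conjEqL (⟨p.1, ⟨x, hx⟩⟩ :: m'))) := boxAnd h1 h2
    refine h3.cut ((H (⟨p.1, ⟨x, hx⟩⟩ :: m')
      (by simp only [List.map_cons, hm'])).weaken ?_)
    intro ψ hψ
    rcases List.mem_cons.1 hψ with h | h
    · exact h ▸ List.mem_cons_self
    · exact List.mem_cons_of_mem _ (List.mem_cons_of_mem _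
        (List.mem_cons_of_mem _ h))

end Deriv

lemma valid_updInt {I : S.V → Option S.Val} (h : ValidInt S I) {X : S.V}
    {x : S.Val} (hx : x ∈ S.RV X) : ValidInt S (updInt I X x) := by
  intro Y v hYv
  unfold updInt at hYv
  split at hYv
  · rename_i hYX
    subst hYX
    cases hYv
    exact hx
  · exact h Y v hYv

lemma mem_Int_updInt (huniv : S.Universal) {I : S.V → Option S.Val}
    (hI : I ∈ S.Int) {X : S.V} {x : S.Val} (hx : x ∈ S.RV X) :
    updInt I X x ∈ S.Int := by
  rw [huniv]
  exact valid_updInt (S.Int_ok I hI) hx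

lemma validInt_finite (hfin : S.IsFinite) :
    {I : S.V → Option S.Val | ValidInt S I}.Finite := by
  haveI := hfin.2.1
  have hsub : {I : S.V → Option S.Val | ValidInt S I} ⊆
      Set.pi Set.univ (fun X => insert none (some '' S.RV X)) := by
    intro I hI X _
    cases h : I X with
    | none => exact Set.mem_insert _ _
    | some x => exact Set.mem_insert_of_mem _ ⟨x, hI X x h, rfl⟩
  exact (Set.Finite.pi (fun X => ((hfin.2.2.2 X).image some).insert none)).subset hsub

open Classical in
lemma existsLeadsTo (hfin : S.IsFinite) (B A : S.V) :
    ∃ g : CForm S, IsLeadsTo B A g := by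
  set T : Set (CForm S) := {ψ | ∃ (I : S.V → Option S.Val) (hI : I ∈ S.Int)
    (y : S.Val) (_ : y ∈ S.RV B) (hIY : updInt I B y ∈ S.Int) (z z' : S.Val)
    (hz : z ∈ S.RV A) (hz' : z' ∈ S.RV A), z ≠ z' ∧
    ψ = ltComp I hI B y hIY A z z' hz hz'} with hT
  have hTfin : T.Finite := by
    set f : (S.V → Option S.Val) × S.Val × S.Val × S.Val → CForm S := fun q =>
      if h : q.1 ∈ S.Int ∧ q.2.1 ∈ S.RV B ∧ updInt q.1 B q.2.1 ∈ S.Int ∧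
          q.2.2.1 ∈ S.RV A ∧ q.2.2.2 ∈ S.RV A then
        ltComp q.1 h.1 B q.2.1 h.2.2.1 A q.2.2.1 q.2.2.2 h.2.2.2.1 h.2.2.2.2
      else CForm.tru with hf
    have hPfin : ({I : S.V → Option S.Val | ValidInt S I} ×ˢ
        (S.RV B ×ˢ (S.RV A ×ˢ S.RV A))).Finite :=
      (validInt_finite hfin).prod ((hfin.2.2.2 B).prod
        ((hfin.2.2.2 A).prod (hfin.2.2.2 A)))
    refine (hPfin.image f).subset ?_
    rintro ψ ⟨I, hI, y, hy, hIY, z, z', hz, hz', _, rfl⟩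
    refine ⟨(I, y, z, z'), ⟨S.Int_ok I hI, hy, hz, hz'⟩, ?_⟩
    have hcond : (I, y, z, z').1 ∈ S.Int ∧ (I, y, z, z').2.1 ∈ S.RV B ∧
        updInt (I, y, z, z').1 B (I, y, z, z').2.1 ∈ S.Int ∧
        (I, y, z, z').2.2.1 ∈ S.RV A ∧ (I, y, z, z').2.2.2 ∈ S.RV A :=
      ⟨hI, hy, hIY, hz, hz'⟩
    simp only [hf, dif_pos hcond]
  refine ⟨CForm.bigOr hTfin.toFinset.toList, hTfin.toFinset.toList, ?_, ?_, rfl⟩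
  · intro ψ hψ
    have : ψ ∈ T := hTfin.mem_toFinset.1 (Finset.mem_toList.1 hψ)
    exact this
  · intro I hI y hy hIY z z' hz hz' hne
    exact Finset.mem_toList.2 (hTfin.mem_toFinset.2
      ⟨I, hI, y, hy, hIY, z, z', hz, hz', hne, rfl⟩)

namespace Deriv

lemma ltIntro {Γ : List (CForm S)} {B A : S.V} {X : S.V → Option S.Val}
    {hX : X ∈ S.Int} {b : S.Val} (hb : b ∈ S.RV B) {hXB : updInt X B b ∈ S.Int}
    {a a' : S.Val} {pa : a ∈ S.RV A} {pa' : a' ∈ S.RV A} (hne : a ≠ a')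
    (h1 : Deriv S Γ (CForm.box X hX (Event.prim A a pa)))
    (h2 : Deriv S Γ (CForm.box (updInt X B b) hXB (Event.prim A a' pa')))
    {g : CForm S} (hg : IsLeadsTo B A g) : Deriv S Γ g := by
  obtain ⟨l, _, hcomp, rfl⟩ := hg
  exact orIntroMem (hcomp X hX b hb hXB a a' pa pa' hne) (andI h1 h2)

lemma cycle1 {Γ : List (CForm S)} {c : CForm S} (hfin : S.IsFinite) (A : S.V)
    (h : ∀ g, IsLeadsTo A A g → Deriv S Γ g) : Deriv S Γ c := by
  obtain ⟨g, hg⟩ := existsLeadsTo hfin A A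
  have hax : Deriv S Γ (CForm.imp (CForm.bigAnd []) (CForm.not g)) :=
    .ax (mem_AXminus_D6 ⟨0, fun _ => A, Fin.elim0, g, fun i => i.elim0, hg,
      by simp [List.ofFn_zero]⟩)
  exact notE (h g hg) (.mp hax (.taut taut_tru))

lemma cycle2 {Γ : List (CForm S)} {c : CForm S} (hfin : S.IsFinite) (B A : S.V)
    (hBA : ∀ g, IsLeadsTo B A g → Deriv S Γ g)
    (hAB : ∀ g, IsLeadsTo A B g → Deriv S Γ g) : Deriv S Γ c := by
  obtain ⟨g1, hg1⟩ := existsLeadsTo hfin B A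
  obtain ⟨g2, hg2⟩ := existsLeadsTo hfin A B
  have h0 : ∀ i : Fin 1, IsLeadsTo ((![B, A]) i.castSucc) ((![B, A]) i.succ)
      ((![g1]) i) := by
    intro i
    fin_cases i
    simpa using hg1
  have hlast : IsLeadsTo ((![B, A]) (Fin.last 1)) ((![B, A]) 0) g2 := by
    simpa using hg2
  have hax : Deriv S Γ (CForm.imp (CForm.bigAnd [g1]) (CForm.not g2)) :=
    .ax (mem_AXminus_D6 ⟨1, ![B, A], ![g1], g2, h0, hlast, by simp [List.ofFn_succ]⟩)
  exact notE (hAB g2 hg2)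
    (.mp hax (andI (hBA g1 hg1) (.taut taut_tru)))

lemma boxContra (hfin : S.IsFinite) (huniv : S.Universal) {Γ : List (CForm S)}
    {c : CForm S} {X : S.V → Option S.Val} {hX : X ∈ S.Int} {A : S.V}
    {a a' : S.Val} {pa : a ∈ S.RV A} {pa' : a' ∈ S.RV A} (hne : a ≠ a')
    (h1 : Deriv S Γ (CForm.box X hX (Event.prim A a pa)))
    (h2 : Deriv S Γ (CForm.box X hX (Event.prim A a' pa'))) : Deriv S Γ c := by
  have hXA : updInt X A a ∈ S.Int := mem_Int_updInt huniv hX pa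
  refine valSplit (I := updInt X A a) (hI := hXA) hfin A (fun f pf => ?_)
  have hf : Deriv S (CForm.box (updInt X A a) hXA (Event.prim A f pf) :: Γ)
      (CForm.box (updInt X A a) hXA (Event.prim A f pf)) :=
    .hyp (List.mem_cons_self)
  by_cases hfa : a = f
  · subst hfa
    exact cycle1 hfin A (fun g hg => ltIntro pa hne.symm h2.weaken1 hf hg)
  · exact cycle1 hfin A (fun g hg => ltIntro pa hfa h1.weaken1 hf hg)

end Deriv

lemma exists_mismatch {α : Type*} {m l : List α} (hlen : m.length = l.length)
    (hne : m ≠ l) :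
    ∃ (i : ℕ) (h1 : i < m.length) (h2 : i < l.length), m[i] ≠ l[i] := by
  by_contra hc
  push_neg at hc
  exact hne (List.ext_getElem hlen hc)

lemma Deriv.boxContraSigma (hfin : S.IsFinite) (huniv : S.Universal)
    {Γ : List (CForm S)} {c : CForm S} {X : S.V → Option S.Val} {hX : X ∈ S.Int}
    {p q : (X : S.V) × {x : S.Val // x ∈ S.RV X}}
    (hfst : p.1 = q.1) (hne : p ≠ q)
    (hp : Deriv S Γ (CForm.box X hX (Event.prim p.1 p.2.1 p.2.2)))
    (hq : Deriv S Γ (CForm.box X hX (Event.prim q.1 q.2.1 q.2.2))) :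
    Deriv S Γ c := by
  obtain ⟨pX, pv, pp⟩ := p
  obtain ⟨qX, qv, qp⟩ := q
  dsimp at hfst hp hq
  subst hfst
  have hval : pv ≠ qv := by
    intro h
    subst h
    exact hne rfl
  exact Deriv.boxContra hfin huniv hval hp hq

end AXminusDeriv


/-- Let `S` be a finite universal signature and let `AX⁻`
consist of D0, D2, D3, D6, D7, D8, D10(a), D10(b) and MP.  Then `AX⁻` proves
every instance of D5:
`AX⁻ ⊢ (⟨X ← x; Y ← y⟩(W = w ∧ Z = z) ∧ ⟨X ← x; W ← w⟩(Y = y ∧ Z = z)) ⇒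
⟨X ← x⟩(W = w ∧ Y = y ∧ Z = z)`, and this holds for any subset `Z` of
`V − (X ∪ {W, Y})` (enumerated by the list `lZ`), not only
`Z = V − (X ∪ {W, Y})`. -/
theorem d5_derivable_in_axminus (S : Signature) (hfin : S.IsFinite)
    (huniv : S.Universal)
    (I : S.V → Option S.Val) (hI : I ∈ S.Int)
    (Y : S.V) (y : S.Val) (hy : y ∈ S.RV Y)
    (W : S.V) (w : S.Val) (hw : w ∈ S.RV W)
    (hIY : updInt I Y y ∈ S.Int) (hIW : updInt I W w ∈ S.Int)
    (lZ : List ((X : S.V) × {x : S.Val // x ∈ S.RV X}))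
    (hlZ : ∀ p ∈ lZ, I p.1 = none ∧ p.1 ≠ W ∧ p.1 ≠ Y)
    (hnd : (lZ.map Sigma.fst).Nodup) :
    Provable (AXminus S) (CForm.imp
      (CForm.and
        (CForm.dia (updInt I Y y) hIY
          (Event.and (Event.prim W w hw) (Event.conjEqL lZ)))
        (CForm.dia (updInt I W w) hIW
          (Event.and (Event.prim Y y hy) (Event.conjEqL lZ))))
      (CForm.dia I hI (Event.and (Event.prim W w hw)
        (Event.and (Event.prim Y y hy) (Event.conjEqL lZ))))) := by
  classical
  apply Deriv.toProvable
  apply Deriv.deduction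
  set φ1 : CForm S := CForm.dia (updInt I Y y) hIY
    (Event.and (Event.prim W w hw) (Event.conjEqL lZ)) with hφ1
  set φ2 : CForm S := CForm.dia (updInt I W w) hIW
    (Event.and (Event.prim Y y hy) (Event.conjEqL lZ)) with hφ2
  refine Deriv.valSplit (I := I) (hI := hI) hfin W (fun w₀ pw₀ => ?_)
  refine Deriv.valSplit (I := I) (hI := hI) hfin Y (fun y₀ py₀ => ?_)
  refine Deriv.zSplit (I := I) (hI := hI) hfin lZ (fun m hm => ?_)
  set Γ3 : List (CForm S) := [CForm.box I hI (Event.conjEqL m),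
    CForm.box I hI (Event.prim Y y₀ py₀), CForm.box I hI (Event.prim W w₀ pw₀),
    CForm.and φ1 φ2] with hΓ3
  have hHyp : Deriv S Γ3 (CForm.and φ1 φ2) := Deriv.hyp
    (List.mem_cons_of_mem _ (List.mem_cons_of_mem _
      (List.mem_cons_of_mem _ (List.mem_cons_self))))
  have hB1 : Deriv S Γ3 (CForm.box (updInt I Y y) hIY
      (Event.and (Event.prim W w hw) (Event.conjEqL lZ))) :=
    Deriv.boxOfDia hHyp.andE1
  have hB2 : Deriv S Γ3 (CForm.box (updInt I W w) hIW
      (Event.and (Event.prim Y y hy) (Event.conjEqL lZ))) :=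
    Deriv.boxOfDia hHyp.andE2
  have hCm : Deriv S Γ3 (CForm.box I hI (Event.conjEqL m)) :=
    Deriv.hyp (List.mem_cons_self)
  have hY0 : Deriv S Γ3 (CForm.box I hI (Event.prim Y y₀ py₀)) :=
    Deriv.hyp (List.mem_cons_of_mem _ (List.mem_cons_self))
  have hW0 : Deriv S Γ3 (CForm.box I hI (Event.prim W w₀ pw₀)) :=
    Deriv.hyp (List.mem_cons_of_mem _ (List.mem_cons_of_mem _
      (List.mem_cons_self)))
  by_cases hy0 : y₀ = y
  · subst hy0
    by_cases hww : w₀ = w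
    · subst hww
      by_cases hmlZ : m = lZ
      · subst hmlZ
        exact Deriv.diaOfBox (Deriv.boxAnd hW0 (Deriv.boxAnd hY0 hCm))
      · have hlen : m.length = lZ.length := by
          have := congrArg List.length hm
          simpa using this
        obtain ⟨i, h1, h2, hpq⟩ := exists_mismatch hlen hmlZ
        have hfst : (m[i]'h1).1 = (lZ[i]'h2).1 := by
          have h3 : (m.map Sigma.fst)[i]'(by simpa using h1)
              = (lZ.map Sigma.fst)[i]'(by simpa using h2) := by
            simp only [hm]
          simpa using h3
        have hJm : Deriv S Γ3 (CForm.box (updInt I Y y₀) hIY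
            (Event.and (Event.prim W w₀ pw₀) (Event.conjEqL m))) :=
          Deriv.d3rule hIY (Deriv.boxAnd hY0 (Deriv.boxAnd hW0 hCm))
        have hJp : Deriv S Γ3 (CForm.box (updInt I Y y₀) hIY
            (Event.prim (m[i]'h1).1 (m[i]'h1).2.1 (m[i]'h1).2.2)) :=
          Deriv.boxMono (etaut_bigAnd_mem
            (List.mem_map_of_mem (f := fun (p : (X : S.V) × {x : S.Val // x ∈ S.RV X}) => Event.prim p.1 p.2.1 p.2.2)
              (List.getElem_mem h1)))
            (Deriv.boxMono (etaut_andE2 _ _) hJm)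
        have hJq : Deriv S Γ3 (CForm.box (updInt I Y y₀) hIY
            (Event.prim (lZ[i]'h2).1 (lZ[i]'h2).2.1 (lZ[i]'h2).2.2)) :=
          Deriv.boxMono (etaut_bigAnd_mem
            (List.mem_map_of_mem (f := fun (p : (X : S.V) × {x : S.Val // x ∈ S.RV X}) => Event.prim p.1 p.2.1 p.2.2)
              (List.getElem_mem h2)))
            (Deriv.boxMono (etaut_andE2 _ _) hB1)
        exact Deriv.boxContraSigma hfin huniv hfst hpq hJp hJq
    · have hJw0 : Deriv S Γ3 (CForm.box (updInt I Y y₀) hIY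
          (Event.prim W w₀ pw₀)) :=
        Deriv.d3rule hIY (Deriv.boxAnd hY0 hW0)
      have hJw : Deriv S Γ3 (CForm.box (updInt I Y y₀) hIY (Event.prim W w hw)) :=
        Deriv.boxMono (etaut_andE1 _ _) hB1
      exact Deriv.boxContra hfin huniv hww hJw0 hJw
  · by_cases hww : w₀ = w
    · subst hww
      have hLy0 : Deriv S Γ3 (CForm.box (updInt I W w₀) hIW
          (Event.prim Y y₀ py₀)) :=
        Deriv.d3rule hIW (Deriv.boxAnd hW0 hY0)
      have hLy : Deriv S Γ3 (CForm.box (updInt I W w₀) hIW (Event.prim Y y hy)) :=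
        Deriv.boxMono (etaut_andE1 _ _) hB2
      exact Deriv.boxContra hfin huniv hy0 hLy0 hLy
    · refine Deriv.cycle2 hfin Y W (fun g hg => ?_) (fun g hg => ?_)
      · exact Deriv.ltIntro hy hww hW0 (Deriv.boxMono (etaut_andE1 _ _) hB1) hg
      · exact Deriv.ltIntro hw hy0 hY0 (Deriv.boxMono (etaut_andE1 _ _) hB2) hg

end Causal
end

section
/- Let S be the signature with a single context u (one exogenous variable with a one-element range), countably infinitely many binary endogenous variables X_1, X_2, … with R(X_i) = {0, 1}, and I = {∅} containing only the empty intervention. Let M be the GSEM over S whose outcome set M(u, ∅) is the set of all assignments in which only finitely many X_i take the value 0, and let M' be the GSEM over S whose outcome set M'(u, ∅) is the set of all assignments in which only finitely many X_i take the value 1. Then M and M' are L(S)-equivalent (they satisfy exactly the same causal formulas of L(S) at u), but M and M' are not equivalent (M(u, ∅) ≠ M'(u, ∅)). -/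
namespace Causal

/-- The signature with a single context, countably many binary endogenous
variables `X₁, X₂, …`, and only the empty intervention allowed. -/
@[reducible] def infSig : Signature where
  U := Unit
  V := ℕ
  Val := ℕ
  RU := fun _ => {0}
  RV := fun _ => ({0, 1} : Set ℕ)
  RU_nonempty := fun _ => ⟨0, rfl⟩
  RV_nonempty := fun _ => ⟨0, Or.inl rfl⟩
  Int := {I | I = fun _ => none}
  Int_ok := by
    intro I hI X x h
    have hI' : I = fun _ => none := hI
    subst hI'
    simp at h

/-- The GSEM `M` whose outcomes under the empty intervention are all
assignments in which only finitely many variables take the value 0. -/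
def Mfin0 : GSEM infSig where
  F := fun _ _ _ => {v | {i : ℕ | v.1 i = 0}.Finite}
  effective := by
    intro I hI u v _ X x h
    have hI' : I = fun _ => none := hI
    subst hI'
    simp at h

/-- The GSEM `M'` whose outcomes under the empty intervention are all
assignments in which only finitely many variables take the value 1. -/
def Mfin1 : GSEM infSig where
  F := fun _ _ _ => {v | {i : ℕ | v.1 i = 1}.Finite}
  effective := by
    intro I hI u v _ X x h
    have hI' : I = fun _ => none := hI
    subst hI'
    simp at h

/-- Variables mentioned in an event over `infSig`. -/
def evars : Event infSig → Finset ℕ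
  | .tru => ∅
  | .prim X _ _ => {X}
  | .not e => evars e
  | .and a b => evars a ∪ evars b
  | .or a b => evars a ∪ evars b

lemma sat_congr (e : Event infSig) (v w : Assignment infSig)
    (h : ∀ i ∈ evars e, v.1 i = w.1 i) : e.sat v ↔ e.sat w := by
  induction e with
  | tru => simp [Event.sat]
  | prim X x hx =>
      simp only [Event.sat]
      rw [h X (by simp [evars])]
  | not e ih =>
      simp only [Event.sat]
      rw [ih (fun i hi => h i (by simpa [evars] using hi))]
  | and a b iha ihb =>
      simp only [Event.sat]
      rw [iha (fun i hi => h i (by simp [evars, hi])),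
          ihb (fun i hi => h i (by simp [evars, hi]))]
  | or a b iha ihb =>
      simp only [Event.sat]
      rw [iha (fun i hi => h i (by simp [evars, hi])),
          ihb (fun i hi => h i (by simp [evars, hi]))]

lemma box_iff_all (e : Event infSig) (c : ℕ) (hc : c ∈ ({0, 1} : Set ℕ)) :
    (∀ v : Assignment infSig, {i : ℕ | v.1 i = 1 - c}.Finite → e.sat v) ↔
    (∀ v : Assignment infSig, e.sat v) := by
  constructor
  · intro h v
    set w : Assignment infSig :=
      ⟨fun i => if i ∈ evars e then v.1 i else c,
       fun X => by dsimp only; split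
                   · exact v.2 X
                   · exact hc⟩ with hw
    have hfin : {i : ℕ | w.1 i = 1 - c}.Finite := by
      apply Set.Finite.subset (evars e).finite_toSet
      intro i hi
      simp only [hw, Set.mem_setOf_eq] at hi
      simp only [Finset.mem_coe]
      by_contra hnot
      rw [if_neg hnot] at hi
      rcases hc with h0 | h1
      · subst h0; simp at hi
      · simp only [Set.mem_singleton_iff] at h1; omega
    have := h w hfin
    rwa [sat_congr e w v (fun i hi => by simp [hw, hi])] at this
  · intro h v _; exact h v

/-- The two GSEMs `M` and `M'` over the signature with
countably many binary endogenous variables and only the empty intervention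
(whose outcomes are, respectively, the assignments with finitely many 0s and
the assignments with finitely many 1s) are `L(S)`-equivalent — they satisfy
exactly the same causal formulas at every context — but they are not
equivalent: their outcome sets differ. -/
theorem inf_models_LEquiv_not_equiv :
    Mfin0.LEquiv Mfin1 ∧ ¬ Mfin0.equiv Mfin1 := by
  constructor
  · intro u φ
    unfold GSEM.sat
    induction φ with
    | tru => simp [CForm.sat]
    | box I hI e =>
        simp only [CForm.sat, Mfin0, Mfin1, Set.mem_setOf_eq]
        have h0 := box_iff_all e 1 (by simp)
        have h1 := box_iff_all e 0 (by simp)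
        simp only [Nat.sub_self, Nat.sub_zero] at h0 h1
        rw [h0, h1]
    | not φ ih => simp only [CForm.sat]; rw [ih]
    | and a b iha ihb => simp only [CForm.sat]; rw [iha, ihb]
    | or a b iha ihb => simp only [CForm.sat]; rw [iha, ihb]
  · intro h
    set v : Assignment infSig := ⟨fun _ => 1, fun _ => by simp⟩ with hv
    have hu : Context infSig := ⟨fun _ => 0, fun _ => rfl⟩
    have heq := h (fun _ => none) rfl hu
    have h0 : v ∈ Mfin0.F (fun _ => none) rfl hu := by
      show {i : ℕ | (1 : ℕ) = 0}.Finite; simp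
    rw [heq] at h0
    have : ({i : ℕ | (1 : ℕ) = 1} : Set ℕ).Finite := by
      exact h0
    simp only [Set.setOf_true] at this
    exact Set.infinite_univ this

end Causal
end
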